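/- Any two points in a closed sector of the annulus A_r of angular width θ = arccos(1 - 1/(2(1/2+r)²)) are at Euclidean distance at most 1, with equality only for the endpoints of a unit chord of the outer circle. -/

import Mathlib

private lemma sector_pos1 (r s₁ s₂ : ℝ) (hr0 : 0 < r) (hr1 : r < 1 / 2)
    (ha1 : 1 / 2 - r ≤ s₁) (ha2 : 1 / 2 - r ≤ s₂) (hb2 : s₂ ≤ 1 / 2 + r) :
    0 ≤ 2*(1/2+r)^2*s₁ + 2*(1/2+r)^3 - 2*(2*(1/2+r)^2-1)*s₂ := by
  have hfR : (0:ℝ) ≤ 2*(1/2+r)*(1 - 2*r*(1/2+r)) := by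
    nlinarith [mul_nonneg (by linarith : (0:ℝ) ≤ 1 + r) (by linarith : (0:ℝ) ≤ 1 - 2*r)]
  have hfa : (0:ℝ) ≤ 2*(1/2+r)^3 - 2*(1/2+r)^2*(1/2-r) + 2*(1/2-r) := by nlinarith
  have t1 : (0:ℝ) ≤ 2*(1/2+r)^2*(s₁-(1/2-r))*(2*r) :=
    mul_nonneg (mul_nonneg (by positivity) (by linarith)) (by linarith)
  have t2 : (0:ℝ) ≤ (s₂-(1/2-r))*(2*(1/2+r)*(1 - 2*r*(1/2+r))) :=
    mul_nonneg (by linarith) hfR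
  have t3 : (0:ℝ) ≤ ((1/2+r)-s₂)*(2*(1/2+r)^3 - 2*(1/2+r)^2*(1/2-r) + 2*(1/2-r)) :=
    mul_nonneg (by linarith) hfa
  have hcert : 2*r*(2*(1/2+r)^2*s₁ + 2*(1/2+r)^3 - 2*(2*(1/2+r)^2-1)*s₂)
      = 2*(1/2+r)^2*(s₁-(1/2-r))*(2*r)
        + (s₂-(1/2-r))*(2*(1/2+r)*(1 - 2*r*(1/2+r)))
        + ((1/2+r)-s₂)*(2*(1/2+r)^3 - 2*(1/2+r)^2*(1/2-r) + 2*(1/2-r)) := by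
    ring
  by_contra h
  push_neg at h
  have h2 : 0 < r * (-(2*(1/2+r)^2*s₁ + 2*(1/2+r)^3 - 2*(2*(1/2+r)^2-1)*s₂)) :=
    mul_pos hr0 (by linarith)
  nlinarith [hcert, t1, t2, t3, h2]

private lemma sector_pos2 (r s : ℝ) (hr0 : 0 < r) (hr1 : r < 1 / 2)
    (ha : 1 / 2 - r ≤ s) :
    0 < 2*(1/2+r)^2*s - 2*(1/2+r)^3 + 2*(1/2+r) := by
  have t1 : (0:ℝ) ≤ 2*(1/2+r)^2*(s-(1/2-r)) := mul_nonneg (by positivity) (by linarith)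
  nlinarith [t1]

set_option maxHeartbeats 1000000 in
theorem sector_aux (r R c θ : ℝ) (hr0 : 0 < r) (hr1 : r < 1 / 2)
    (hR : R = 1 / 2 + r) (hc : c = 1 - 1 / (2 * R ^ 2)) (hθv : θ = Real.arccos c)
    (α s₁ s₂ φ₁ φ₂ : ℝ)
    (hs₁ : s₁ ∈ Set.Icc (1 / 2 - r) R) (hs₂ : s₂ ∈ Set.Icc (1 / 2 - r) R)
    (hφ₁ : φ₁ ∈ Set.Icc α (α + θ)) (hφ₂ : φ₂ ∈ Set.Icc α (α + θ))
    (p q : ℂ)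
    (hp : p = (s₁ : ℂ) * Complex.exp (φ₁ * Complex.I))
    (hq : q = (s₂ : ℂ) * Complex.exp (φ₂ * Complex.I)) :
    ‖p - q‖ ≤ 1 ∧
      (‖p - q‖ = 1 → s₁ = R ∧ s₂ = R ∧ |φ₁ - φ₂| = θ) := by
  have hRpos : (0:ℝ) < R := by rw [hR]; linarith
  have hR2pos : (0:ℝ) < 2 * R ^ 2 := by positivity
  have hkey : 2 * R ^ 2 * c = 2 * R ^ 2 - 1 := by
    rw [hc]; field_simp
  have hc1 : c ≤ 1 := by
    rw [hc]; have : 0 < 1 / (2 * R ^ 2) := by positivity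
    linarith
  have hcm1 : -1 ≤ c := by
    rw [hc]
    have h2 : 1 / (2 * R ^ 2) < 2 := by
      rw [div_lt_iff₀ hR2pos]
      nlinarith [hRpos, sq_nonneg R]
    linarith
  have hcosθ : Real.cos θ = c := by rw [hθv]; exact Real.cos_arccos hcm1 hc1
  have hθ0 : 0 ≤ θ := by rw [hθv]; exact Real.arccos_nonneg c
  have hθπ : θ ≤ Real.pi := by rw [hθv]; exact Real.arccos_le_pi c
  obtain ⟨ha1, hb1⟩ := hs₁
  obtain ⟨ha2, hb2⟩ := hs₂
  obtain ⟨hl1, hu1⟩ := hφ₁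
  obtain ⟨hl2, hu2⟩ := hφ₂
  have hΔ : |φ₁ - φ₂| ≤ θ := by
    rw [abs_sub_le_iff]; constructor <;> linarith
  have hcosΔ : c ≤ Real.cos (φ₁ - φ₂) := by
    rw [← Real.cos_abs (φ₁ - φ₂), ← hcosθ]
    exact Real.cos_le_cos_of_nonneg_of_le_pi (abs_nonneg _) hθπ hΔ
  have hnorm : ‖p - q‖ ^ 2 = s₁^2 + s₂^2 - 2*s₁*s₂*Real.cos (φ₁ - φ₂) := by
    rw [hp, hq, Complex.sq_norm, Complex.normSq_apply]
    simp [Complex.exp_mul_I, Complex.cos_ofReal_re, Complex.sin_ofReal_re, Real.cos_sub]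
    nlinarith [Real.sin_sq_add_cos_sq φ₁, Real.sin_sq_add_cos_sq φ₂]
  have hmulnn : ∀ x : ℝ, 0 ≤ 2*R^2*x → 0 ≤ x := by
    intro x hx
    by_contra h
    push_neg at h
    have h2 : 2*R^2*x < 2*R^2*0 := by
      exact mul_lt_mul_of_pos_left h hR2pos
    simp at h2
    linarith
  have hmulpos : ∀ x : ℝ, 0 < 2*R^2*x → 0 < x := by
    intro x hx
    by_contra h
    push_neg at h
    have h2 : 2*R^2*x ≤ 2*R^2*0 := mul_le_mul_of_nonneg_left h hR2pos.le
    simp at h2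
    linarith
  have hT1 : 0 ≤ s₁ + R - 2*c*s₂ := by
    apply hmulnn
    have hid : 2*R^2*(s₁ + R - 2*c*s₂) = 2*R^2*s₁ + 2*R^3 - 2*(2*R^2-1)*s₂ := by
      linear_combination (-2*s₂) * hkey
    rw [hid, hR]
    have hb2' : s₂ ≤ 1/2 + r := by rw [← hR]; exact hb2
    exact sector_pos1 r s₁ s₂ hr0 hr1 ha1 ha2 hb2'
  have hT2 : 0 < s₂ + R - 2*c*R := by
    apply hmulpos
    have hid : 2*R^2*(s₂ + R - 2*c*R) = 2*R^2*s₂ - 2*R^3 + 2*R := by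
      linear_combination (-2*R) * hkey
    rw [hid, hR]
    exact sector_pos2 r s₂ hr0 hr1 ha2
  have hT2' : 0 < s₁ + R - 2*c*R := by
    apply hmulpos
    have hid : 2*R^2*(s₁ + R - 2*c*R) = 2*R^2*s₁ - 2*R^3 + 2*R := by
      linear_combination (-2*R) * hkey
    rw [hid, hR]
    exact sector_pos2 r s₁ hr0 hr1 ha1
  have hdecomp : (R - s₁)*(s₁ + R - 2*c*s₂) + (R - s₂)*(s₂ + R - 2*c*R)
      = 1 - s₁^2 - s₂^2 + 2*c*s₁*s₂ := by
    linear_combination (-1 : ℝ) * hkey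
  have ht1nn : 0 ≤ (R - s₁)*(s₁ + R - 2*c*s₂) :=
    mul_nonneg (by linarith) hT1
  have ht2nn : 0 ≤ (R - s₂)*(s₂ + R - 2*c*R) :=
    mul_nonneg (by linarith) hT2.le
  have hs1pos : 0 < s₁ := by rw [hR] at hb1; linarith
  have hs2pos : 0 < s₂ := by rw [hR] at hb2; linarith
  have hss : 0 < s₁ * s₂ := mul_pos hs1pos hs2pos
  have hchain : s₁^2 + s₂^2 - 2*s₁*s₂*Real.cos (φ₁ - φ₂) ≤ s₁^2 + s₂^2 - 2*c*s₁*s₂ := by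
    have h := mul_nonneg hss.le (sub_nonneg.2 hcosΔ)
    nlinarith [h]
  have hmain2 : ‖p - q‖ ^ 2 ≤ 1 := by
    rw [hnorm]
    linarith [hdecomp, ht1nn, ht2nn, hchain]
  have hmain : ‖p - q‖ ≤ 1 := by
    have h0 := norm_nonneg (p - q)
    nlinarith [hmain2, h0]
  refine ⟨hmain, fun heq => ?_⟩
  have heq2 : s₁^2 + s₂^2 - 2*s₁*s₂*Real.cos (φ₁ - φ₂) = 1 := by
    rw [← hnorm, heq]; norm_num
  have hg0 : 1 - s₁^2 - s₂^2 + 2*c*s₁*s₂ = 0 := by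
    linarith [heq2, hchain, hdecomp, ht1nn, ht2nn]
  have hsum0 : (R - s₁)*(s₁ + R - 2*c*s₂) + (R - s₂)*(s₂ + R - 2*c*R) = 0 := by
    rw [hdecomp, hg0]
  have hs2R : s₂ = R := by
    have h2 : (R - s₂)*(s₂ + R - 2*c*R) = 0 := by linarith [ht1nn, ht2nn]
    rcases mul_eq_zero.mp h2 with h | h
    · linarith
    · linarith
  have hs1R : s₁ = R := by
    have h1 : (R - s₁)*(s₁ + R - 2*c*s₂) = 0 := by linarith [ht1nn, ht2nn]
    rw [hs2R] at h1
    rcases mul_eq_zero.mp h1 with h | h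
    · linarith
    · linarith
  refine ⟨hs1R, hs2R, ?_⟩
  have hcos_eq : Real.cos (φ₁ - φ₂) = c := by
    have h : (s₁*s₂) * Real.cos (φ₁ - φ₂) = (s₁*s₂) * c := by
      linarith [heq2, hg0]
    exact mul_left_cancel₀ (ne_of_gt hss) h
  have harc : Real.arccos (Real.cos |φ₁ - φ₂|) = |φ₁ - φ₂| :=
    Real.arccos_cos (abs_nonneg _) (le_trans hΔ hθπ)
  rw [Real.cos_abs, hcos_eq] at harc
  rw [← harc, hθv]


theorem unit_sector_diameter (r : ℝ) (hr0 : 0 < r) (hr1 : r < 1 / 2)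
    (α s₁ s₂ φ₁ φ₂ : ℝ)
    (hs₁ : s₁ ∈ Set.Icc (1 / 2 - r) (1 / 2 + r)) (hs₂ : s₂ ∈ Set.Icc (1 / 2 - r) (1 / 2 + r))
    (hφ₁ : φ₁ ∈ Set.Icc α (α + Real.arccos (1 - 1 / (2 * (1 / 2 + r) ^ 2))))
    (hφ₂ : φ₂ ∈ Set.Icc α (α + Real.arccos (1 - 1 / (2 * (1 / 2 + r) ^ 2))))
    (p q : ℂ)
    (hp : p = (s₁ : ℂ) * Complex.exp (φ₁ * Complex.I))
    (hq : q = (s₂ : ℂ) * Complex.exp (φ₂ * Complex.I)) :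
    ‖p - q‖ ≤ 1 ∧
      (‖p - q‖ = 1 →
        s₁ = 1 / 2 + r ∧ s₂ = 1 / 2 + r ∧
          |φ₁ - φ₂| = Real.arccos (1 - 1 / (2 * (1 / 2 + r) ^ 2))) := by
  exact sector_aux r (1 / 2 + r) (1 - 1 / (2 * (1 / 2 + r) ^ 2))
    (Real.arccos (1 - 1 / (2 * (1 / 2 + r) ^ 2))) hr0 hr1 rfl rfl rfl
    α s₁ s₂ φ₁ φ₂ hs₁ hs₂ hφ₁ hφ₂ p q hp hq
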